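/- For every pair of positive integers A and n, there exist unique integers δ and a_n > a_{n−1} > ... > a_δ, with 1 ≤ δ ≤ n and a_j ≥ j for every j with δ ≤ j ≤ n, such that A = C(a_n, n) + C(a_{n−1}, n−1) + ... + C(a_δ, δ). -/

import Mathlib

/-- Binomial coefficient with the convention `C(a, b) = 0` whenever `b = 0`
(the convention `C(a, b) = 0` for `a < b` is already built into `Nat.choose`). -/
def mchoose (a b : ℕ) : ℕ := if b = 0 then 0 else Nat.choose a b

/-- `IsMacaulayRep A n δ c` says that
`A = C(c n, n) + C(c (n-1), n-1) + ⋯ + C(c δ, δ)` is the `n`-th Macaulay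
representation of `A`, i.e. `1 ≤ δ ≤ n`, `c j ≥ j` for `δ ≤ j ≤ n`, and the
`c j` are strictly increasing in `j` on `[δ, n]`. -/
def IsMacaulayRep (A n δ : ℕ) (c : ℕ → ℕ) : Prop :=
  1 ≤ δ ∧ δ ≤ n ∧ (∀ j, δ ≤ j → j ≤ n → j ≤ c j) ∧
    (∀ j, δ ≤ j → j < n → c j < c (j + 1)) ∧
    A = ∑ j ∈ Finset.Icc δ n, Nat.choose (c j) j

/-- `IsMacaulayLower A n v` says that `v = A_{<n>} = C(a_n - 1, n) + ⋯ + C(a_δ - 1, δ)`,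
computed from the `n`-th Macaulay representation of `A`, with the convention `0_{<n>} = 0`. -/
def IsMacaulayLower (A n v : ℕ) : Prop :=
  (A = 0 ∧ v = 0) ∨
    ∃ δ c, IsMacaulayRep A n δ c ∧ v = ∑ j ∈ Finset.Icc δ n, Nat.choose (c j - 1) j

/-- `IsMacaulayMinus A n v` says that `v = A^{-<n>} = C(a_n - 1, n-1) + ⋯ + C(a_δ - 1, δ-1)`,
computed from the `n`-th Macaulay representation of `A`, with the convention `0^{-<n>} = 0`
(and `C(a, 0) = 0`). -/
def IsMacaulayMinus (A n v : ℕ) : Prop :=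
  (A = 0 ∧ v = 0) ∨
    ∃ δ c, IsMacaulayRep A n δ c ∧ v = ∑ j ∈ Finset.Icc δ n, mchoose (c j - 1) (j - 1)

/-- `IsMacaulayUpper A n v` says that `v = A^{<n>} = C(a_n + 1, n+1) + ⋯ + C(a_δ + 1, δ+1)`,
computed from the `n`-th Macaulay representation of `A`, with the convention `0^{<n>} = 0`. -/
def IsMacaulayUpper (A n v : ℕ) : Prop :=
  (A = 0 ∧ v = 0) ∨
    ∃ δ c, IsMacaulayRep A n δ c ∧ v = ∑ j ∈ Finset.Icc δ n, Nat.choose (c j + 1) (j + 1)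


private lemma sub_le_choose (a k : ℕ) : a - k ≤ Nat.choose a (k+1) := by
  induction a with
  | zero => simp
  | succ a ih =>
    rw [Nat.choose_succ_succ]
    simp only [Nat.succ_eq_add_one]
    rcases le_or_gt k a with h | h
    · have := Nat.choose_pos h
      omega
    · omega

private lemma hockey : ∀ n, 1 ≤ n → ∀ a, n ≤ a →
    Nat.choose (a+1) n = 1 + ∑ j ∈ Finset.Icc 1 n, Nat.choose (a - n + j) j := by
  intro n
  induction n with
  | zero => omega
  | succ n ih =>
    intro _ a ha
    rcases Nat.eq_zero_or_pos n with h0 | h1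
    · subst h0
      simp [Nat.choose_one_right]
      omega
    · have ih' := ih h1 (a - 1) (by omega)
      rw [show a - 1 + 1 = a by omega] at ih'
      rw [← Finset.insert_Icc_right_eq_Icc_add_one (by omega : 1 ≤ n + 1),
        Finset.sum_insert (by simp), Nat.choose_succ_succ',
        show a - (n+1) + (n+1) = a by omega]
      have hs : ∑ j ∈ Finset.Icc 1 n, Nat.choose (a - (n+1) + j) j
           = ∑ j ∈ Finset.Icc 1 n, Nat.choose (a - 1 - n + j) j := by
        apply Finset.sum_congr rfl
        intro j hj
        congr 1
        omega
      rw [hs, ih']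
      ring

private lemma chain {A n δ : ℕ} {c : ℕ → ℕ} (h : IsMacaulayRep A n δ c) :
    ∀ j, δ ≤ j → j ≤ n → c j + (n - j) ≤ c n := by
  obtain ⟨h1, h2, h3, h4, h5⟩ := h
  have key : ∀ k j, δ ≤ j → j + k ≤ n → c j + k ≤ c (j + k) := by
    intro k
    induction k with
    | zero => simp
    | succ k ih =>
      intro j hj hjk
      have e : j + (k+1) = j + k + 1 := rfl
      rw [e]
      have h1' := ih j hj (by omega)
      have h2' := h4 (j + k) (by omega) (by omega)
      omega
  intro j hj hjn
  have e : j + (n - j) = n := by omega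
  have := key (n - j) j hj (by omega)
  rw [e] at this
  exact this

private lemma rep_lt {A n δ : ℕ} {c : ℕ → ℕ} (hn : 1 ≤ n) (h : IsMacaulayRep A n δ c) :
    A < Nat.choose (c n + 1) n := by
  have hch := chain h
  obtain ⟨h1, h2, h3, h4, h5⟩ := h
  have hcn : n ≤ c n := by
    have t1 := hch δ le_rfl h2
    have t2 := h3 δ le_rfl h2
    omega
  have hb : A ≤ ∑ j ∈ Finset.Icc 1 n, Nat.choose (c n - n + j) j := by
    rw [h5]
    calc ∑ j ∈ Finset.Icc δ n, Nat.choose (c j) j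
        ≤ ∑ j ∈ Finset.Icc δ n, Nat.choose (c n - n + j) j := by
          apply Finset.sum_le_sum
          intro j hj
          rw [Finset.mem_Icc] at hj
          apply Nat.choose_le_choose
          have := hch j hj.1 hj.2
          omega
      _ ≤ ∑ j ∈ Finset.Icc 1 n, Nat.choose (c n - n + j) j :=
          Finset.sum_le_sum_of_subset (Finset.Icc_subset_Icc_left h1)
  have := hockey n hn (c n) hcn
  omega

private lemma rep_le {A n δ : ℕ} {c : ℕ → ℕ} (h : IsMacaulayRep A n δ c) :
    Nat.choose (c n) n ≤ A := by
  obtain ⟨h1, h2, h3, h4, h5⟩ := h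
  rw [h5]
  exact Finset.single_le_sum (f := fun j => Nat.choose (c j) j)
    (fun i _ => Nat.zero_le _) (Finset.mem_Icc.2 ⟨h2, le_rfl⟩)

private lemma top_eq {A n δ δ' : ℕ} {c c' : ℕ → ℕ} (hn : 1 ≤ n)
    (h : IsMacaulayRep A n δ c) (h' : IsMacaulayRep A n δ' c') : c n = c' n := by
  have l1 := rep_le h; have u1 := rep_lt hn h
  have l2 := rep_le h'; have u2 := rep_lt hn h'
  by_contra hne
  rcases Nat.lt_or_ge (c n) (c' n) with hlt | hge
  · have := Nat.choose_le_choose n (show c n + 1 ≤ c' n by omega)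
    omega
  · have := Nat.choose_le_choose n (show c' n + 1 ≤ c n by omega)
    omega

private lemma mac_exists : ∀ n, 1 ≤ n → ∀ A, 1 ≤ A → ∃ δ c, IsMacaulayRep A n δ c := by
  intro n
  induction n with
  | zero => omega
  | succ n ih =>
    intro _ A hA
    rcases Nat.eq_zero_or_pos n with h0 | h1
    · subst h0
      refine ⟨1, fun _ => A, le_rfl, le_rfl, ?_, ?_, ?_⟩
      · intro j hj hjn
        have : j = 1 := by omega
        subst this
        exact hA
      · intro j hj hjn; omega
      · simp [Nat.choose_one_right]
    · have key : ∃ a, n+1 ≤ a ∧ Nat.choose a (n+1) ≤ A ∧ A < Nat.choose (a+1) (n+1) := by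
        set a := Nat.findGreatest (fun x => Nat.choose x (n+1) ≤ A) (A + n + 1) with ha
        have h1a : n + 1 ≤ a := Nat.le_findGreatest (by omega) (by simp [hA])
        have h2a : Nat.choose a (n+1) ≤ A :=
          Nat.findGreatest_spec (P := fun x => Nat.choose x (n+1) ≤ A)
            (m := n+1) (by omega) (by simp [hA])
        have h3a : A < Nat.choose (a+1) (n+1) := by
          rcases Nat.lt_or_ge (A + n + 1) (a + 1) with hbig | hsmall
          · have hs1 := sub_le_choose (a+1) n
            omega
          · by_contra hcon
            have hng : ¬ (Nat.choose (a+1) (n+1) ≤ A) :=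
              Nat.findGreatest_is_greatest (P := fun x => Nat.choose x (n+1) ≤ A)
                (k := a + 1) (by omega) hsmall
            omega
        exact ⟨a, h1a, h2a, h3a⟩
      obtain ⟨a, han, haA, hup⟩ := key
      rcases Nat.eq_zero_or_pos (A - Nat.choose a (n+1)) with hz | hpos
      · refine ⟨n+1, fun _ => a, by omega, le_rfl, ?_, ?_, ?_⟩
        · intro j hj hjn
          show j ≤ a
          omega
        · intro j hj hjn; omega
        · show A = ∑ j ∈ Finset.Icc (n+1) (n+1), Nat.choose a j
          simp only [Finset.Icc_self, Finset.sum_singleton]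
          omega
      · obtain ⟨δ, c, hrep⟩ := ih h1 (A - Nat.choose a (n+1)) hpos
        have hcn_lt : c n < a := by
          have hle := rep_le hrep
          have hstep : Nat.choose (a+1) (n+1) = Nat.choose a n + Nat.choose a (n+1) :=
            Nat.choose_succ_succ' a n
          by_contra hcon
          have := Nat.choose_le_choose n (show a ≤ c n by omega)
          omega
        obtain ⟨h1', h2', h3', h4', h5'⟩ := hrep
        refine ⟨δ, fun j => if j ≤ n then c j else a, h1', by omega, ?_, ?_, ?_⟩
        · intro j hj hjn
          by_cases hc : j ≤ n
          · simpa [hc] using h3' j hj hc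
          · simp only [if_neg hc]; omega
        · intro j hj hjn
          by_cases hc : j < n
          · simp only [if_pos (by omega : j ≤ n), if_pos (by omega : j + 1 ≤ n)]
            exact h4' j hj hc
          · have hjn' : j = n := by omega
            simp only [if_pos (by omega : j ≤ n), if_neg (by omega : ¬ j + 1 ≤ n)]
            rw [hjn']
            exact hcn_lt
        · rw [← Finset.insert_Icc_right_eq_Icc_add_one (by omega : δ ≤ n + 1),
            Finset.sum_insert (by simp)]
          simp only [if_neg (by omega : ¬ n + 1 ≤ n)]
          have hs : ∑ j ∈ Finset.Icc δ n, Nat.choose (if j ≤ n then c j else a) j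
               = ∑ j ∈ Finset.Icc δ n, Nat.choose (c j) j := by
            apply Finset.sum_congr rfl
            intro j hj
            rw [Finset.mem_Icc] at hj
            rw [if_pos hj.2]
          rw [hs, ← h5']
          omega

private lemma mac_unique : ∀ n, 1 ≤ n → ∀ A δ c δ' c',
    IsMacaulayRep A n δ c → IsMacaulayRep A n δ' c' →
    δ = δ' ∧ ∀ j, δ ≤ j → j ≤ n → c j = c' j := by
  intro n
  induction n with
  | zero => omega
  | succ n ih =>
    intro _ A δ c δ' c' h h'
    have htop : c (n+1) = c' (n+1) := top_eq (by omega) h h'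
    obtain ⟨h1, h2, h3, h4, h5⟩ := h
    obtain ⟨h1', h2', h3', h4', h5'⟩ := h'
    rcases Nat.eq_zero_or_pos n with h0 | hn1
    · subst h0
      refine ⟨by omega, fun j hj hjn => ?_⟩
      have hj1 : j = 1 := by omega
      rw [hj1]
      exact htop
    · have hsplit : ∀ (δ₀ : ℕ) (c₀ : ℕ → ℕ), δ₀ ≤ n →
          ∑ j ∈ Finset.Icc δ₀ (n+1), Nat.choose (c₀ j) j
          = ∑ j ∈ Finset.Icc δ₀ n, Nat.choose (c₀ j) j + Nat.choose (c₀ (n+1)) (n+1) := by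
        intro δ₀ c₀ hδ₀
        rw [← Finset.insert_Icc_right_eq_Icc_add_one (by omega : δ₀ ≤ n + 1),
          Finset.sum_insert (by simp)]
        omega
      have hlow : ∀ (δ₀ : ℕ) (c₀ : ℕ → ℕ), 1 ≤ δ₀ → δ₀ ≤ n → (δ₀ ≤ c₀ δ₀) →
          1 ≤ ∑ j ∈ Finset.Icc δ₀ n, Nat.choose (c₀ j) j := by
        intro δ₀ c₀ hδ1 hδn hc
        have hmem : δ₀ ∈ Finset.Icc δ₀ n := Finset.mem_Icc.2 ⟨le_rfl, hδn⟩
        have hpos : 1 ≤ Nat.choose (c₀ δ₀) δ₀ := Nat.choose_pos hc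
        have hss := Finset.single_le_sum (f := fun j => Nat.choose (c₀ j) j)
          (fun i _ => Nat.zero_le _) hmem
        omega
      by_cases hδtop : δ = n + 1
      · have hA1 : A = Nat.choose (c (n+1)) (n+1) := by
          rw [h5, hδtop, Finset.Icc_self, Finset.sum_singleton]
        have hδ'top : δ' = n + 1 := by
          by_contra hne
          have hδ'n : δ' ≤ n := by omega
          have hl := hlow δ' c' h1' hδ'n (h3' δ' le_rfl (by omega))
          have hsp := hsplit δ' c' hδ'n
          rw [htop] at hA1
          rw [hsp] at h5'
          omega
        refine ⟨by omega, fun j hj hjn => ?_⟩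
        have hj1 : j = n + 1 := by omega
        rw [hj1]
        exact htop
      · by_cases hδ'top : δ' = n + 1
        · have hA1 : A = Nat.choose (c' (n+1)) (n+1) := by
            rw [h5', hδ'top, Finset.Icc_self, Finset.sum_singleton]
          exfalso
          have hδn : δ ≤ n := by omega
          have hl := hlow δ c h1 hδn (h3 δ le_rfl (by omega))
          have hsp := hsplit δ c hδn
          rw [← htop] at hA1
          rw [hsp] at h5
          omega
        · have hδn : δ ≤ n := by omega
          have hδ'n : δ' ≤ n := by omega
          have e1 := hsplit δ c hδn
          have e2 := hsplit δ' c' hδ'n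
          have hBeq : ∑ j ∈ Finset.Icc δ' n, Nat.choose (c' j) j
              = ∑ j ∈ Finset.Icc δ n, Nat.choose (c j) j := by
            rw [← h5] at e1
            rw [← h5'] at e2
            rw [htop] at e1
            omega
          have rep1 : IsMacaulayRep (∑ j ∈ Finset.Icc δ n, Nat.choose (c j) j) n δ c :=
            ⟨h1, hδn, fun j hj hjn => h3 j hj (by omega),
             fun j hj hjn => h4 j hj (by omega), rfl⟩
          have rep2 : IsMacaulayRep (∑ j ∈ Finset.Icc δ n, Nat.choose (c j) j) n δ' c' :=
            ⟨h1', hδ'n, fun j hj hjn => h3' j hj (by omega),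
             fun j hj hjn => h4' j hj (by omega), hBeq.symm⟩
          obtain ⟨hδeq, hceq⟩ := ih hn1 _ δ c δ' c' rep1 rep2
          refine ⟨hδeq, fun j hj hjn => ?_⟩
          by_cases hc : j ≤ n
          · exact hceq j hj hc
          · have hj1 : j = n + 1 := by omega
            rw [hj1]
            exact htop

/-- **Existence and uniqueness of the `n`-th Macaulay representation.**
For all positive integers `A` and `n` there exist unique `δ` with `1 ≤ δ ≤ n` and
integers `a_n > a_(n-1) > ⋯ > a_δ` with `a_j ≥ j` for `δ ≤ j ≤ n`, such that
`A = C(a_n, n) + C(a_(n-1), n-1) + ⋯ + C(a_δ, δ)`. -/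
theorem macaulay_rep_exists_unique (A n : ℕ) (hA : 1 ≤ A) (hn : 1 ≤ n) :
    (∃ δ c, IsMacaulayRep A n δ c) ∧
    (∀ δ c δ' c', IsMacaulayRep A n δ c → IsMacaulayRep A n δ' c' →
      δ = δ' ∧ ∀ j, δ ≤ j → j ≤ n → c j = c' j) := by
  refine ⟨mac_exists n hn A hA, ?_⟩
  intro δ c δ' c' h h'
  exact mac_unique n hn A δ c δ' c' h h'
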